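/- Let R be a discrete valuation ring with uniformizer π. Let A be an R-module which is π-adically separated, i.e. ⋂_{n≥0} πⁿA = 0. Let (B_λ)_{λ∈L} be a family of π-torsion-free R-modules and φ_λ : A → B_λ a family of R-linear maps such that the intersection over λ ∈ L of the kernels of the induced maps A/πA → B_λ/πB_λ is zero. Then A is π-torsion-free (hence flat over R) and ⋂_{λ∈L} ker(φ_λ) = 0. -/

import Mathlib

open scoped TensorProduct

private lemma flat_of_tf {R : Type*} [CommRing R] [IsPrincipalIdealRing R]
    {M : Type*} [AddCommGroup M] [Module R M]
    (h : ∀ r : R, r ≠ 0 → ∀ m : M, r • m = 0 → m = 0) : Module.Flat R M := by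
  rw [Module.Flat.iff_rTensor_injective]
  intro I _
  obtain ⟨r, rfl⟩ := (IsPrincipalIdealRing.principal I).principal
  by_cases hr : r = 0
  · subst hr
    haveI : Subsingleton (Submodule.span R ({0} : Set R)) :=
      Submodule.subsingleton_iff_eq_bot.mpr (by simp)
    intro x y _
    exact Subsingleton.elim x y
  · set I : Ideal R := Ideal.span {r} with hI
    have hrI : r ∈ I := Submodule.mem_span_singleton_self r
    set ψ : R →ₗ[R] I := LinearMap.toSpanSingleton R I ⟨r, hrI⟩ with hψdef
    have hψ : Function.Surjective ψ := by
      rintro ⟨y, hy⟩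
      obtain ⟨x, hx⟩ := Submodule.mem_span_singleton.mp hy
      exact ⟨x, Subtype.ext (by simpa [hψdef, LinearMap.toSpanSingleton_apply] using hx)⟩
    have hsurj : Function.Surjective (ψ.rTensor M) := LinearMap.rTensor_surjective M hψ
    have hcomp : I.subtype.comp ψ = LinearMap.toSpanSingleton R R r := by
      ext
      simp [hψdef, LinearMap.toSpanSingleton_apply]
    -- injectivity of rTensor of toSpanSingleton
    have hsmul : Function.Injective (fun m : M => r • m) := by
      intro a b hab
      have : r • (a - b) = 0 := by
        simp only [smul_sub]
        simpa [sub_eq_zero] using hab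
      have := h r hr _ this
      exact sub_eq_zero.mp this
    have heq : ∀ z : R ⊗[R] M,
        TensorProduct.lid R M ((LinearMap.toSpanSingleton R R r).rTensor M z)
          = r • TensorProduct.lid R M z := by
      intro z
      have : (TensorProduct.lid R M).toLinearMap.comp
          ((LinearMap.toSpanSingleton R R r).rTensor M)
          = (r • LinearMap.id).comp (TensorProduct.lid R M).toLinearMap := by
        apply TensorProduct.ext'
        intro x m
        simp [LinearMap.toSpanSingleton_apply, smul_smul, mul_comm]
      exact DFunLike.congr_fun this z
    have hinj0 : Function.Injective ((LinearMap.toSpanSingleton R R r).rTensor M) := by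
      intro x y hxy
      have h1 : r • TensorProduct.lid R M x = r • TensorProduct.lid R M y := by
        rw [← heq, ← heq, hxy]
      have h2 : TensorProduct.lid R M x = TensorProduct.lid R M y := hsmul h1
      exact (TensorProduct.lid R M).injective h2
    have hinj : Function.Injective ((I.subtype.rTensor M).comp (ψ.rTensor M)) := by
      rw [← LinearMap.rTensor_comp, hcomp]
      exact hinj0
    intro x y hxy
    obtain ⟨x', rfl⟩ := hsurj x
    obtain ⟨y', rfl⟩ := hsurj y
    exact congrArg _ (hinj hxy)

/-- Let `R` be a DVR with uniformizer `π`. Let `A` be a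
`π`-adically separated `R`-module, `(B l)` a family of `π`-torsion-free
`R`-modules and `φ l : A → B l` `R`-linear maps such that the intersection of
the kernels of the induced maps `A/πA → B l/πB l` is zero. Then `A` is
`π`-torsion-free (hence flat over `R`) and `⋂ ker (φ l) = 0`. -/
theorem stmt4 {R : Type*} [CommRing R] [IsDomain R] [IsDiscreteValuationRing R]
    (π : R) (hπ : Irreducible π)
    {L : Type*} {A : Type*} [AddCommGroup A] [Module R A]
    (B : L → Type*) [∀ l, AddCommGroup (B l)] [∀ l, Module R (B l)]
    (hsep : ∀ a : A, (∀ n : ℕ, ∃ b : A, a = π ^ n • b) → a = 0)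
    (htf : ∀ (l : L) (b : B l), π • b = 0 → b = 0)
    (φ : ∀ l, A →ₗ[R] B l)
    (hker : ∀ a : A, (∀ l, ∃ b : B l, φ l a = π • b) → ∃ a' : A, a = π • a') :
    (∀ a : A, π • a = 0 → a = 0) ∧ Module.Flat R A ∧
      ∀ a : A, (∀ l, φ l a = 0) → a = 0 := by
  have key : ∀ a : A, (∀ l, φ l a = 0) → a = 0 := by
    have h : ∀ n : ℕ, ∀ a : A, (∀ l, φ l a = 0) →
        ∃ b, (∀ l, φ l b = 0) ∧ a = π ^ n • b := by
      intro n
      induction n with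
      | zero => intro a ha; exact ⟨a, ha, by simp⟩
      | succ n ih =>
        intro a ha
        obtain ⟨b, hb, rfl⟩ := ih a ha
        obtain ⟨b', hb'⟩ := hker b (fun l => ⟨0, by simp [hb l]⟩)
        refine ⟨b', fun l => ?_, ?_⟩
        · apply htf l
          rw [← map_smul, ← hb']
          exact hb l
        · rw [hb', smul_smul, ← pow_succ]
    intro a ha
    apply hsep
    intro n
    obtain ⟨b, _, hb⟩ := h n a ha
    exact ⟨b, hb⟩
  have htors : ∀ a : A, π • a = 0 → a = 0 := by
    intro a ha
    apply key
    intro l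
    apply htf l
    rw [← map_smul, ha, map_zero]
  have hpow : ∀ (n : ℕ) (a : A), π ^ n • a = 0 → a = 0 := by
    intro n
    induction n with
    | zero => intro a ha; simpa using ha
    | succ n ih =>
      intro a ha
      apply ih
      apply htors
      rw [smul_smul, ← pow_succ']
      exact ha
  refine ⟨htors, ?_, key⟩
  apply flat_of_tf
  intro r hr m hm
  obtain ⟨n, u, rfl⟩ := IsDiscreteValuationRing.eq_unit_mul_pow_irreducible hr hπ
  apply hpow n
  have : (((u⁻¹ : Rˣ) : R) * ((u : R) * π ^ n)) • m = 0 := by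
    rw [mul_smul, hm, smul_zero]
  rwa [← mul_assoc, Units.inv_mul, one_mul] at this
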